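/- Let T be a recursively axiomatizable extension of Robinson arithmetic Q, with φ chosen to be a Σ₁ formula defining the relation B. If T is consistent, then T does not prove ¬φ(n,t) (although ¬φ(n,t) is true in ω). -/

import Mathlib

namespace Boolos

/-- Terms of the first-order language of arithmetic: variables v₀,v₁,…, 0, successor s, +, ·. -/
inductive Term : Type
  | var : ℕ → Term
  | zero : Term
  | succ : Term → Term
  | add : Term → Term → Term
  | mul : Term → Term → Term
  deriving DecidableEq

/-- Formulas of the first-order language of arithmetic. -/
inductive Formula : Type
  | eq : Term → Term → Formula
  | lt : Term → Term → Formula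
  | not : Formula → Formula
  | and : Formula → Formula → Formula
  | or : Formula → Formula → Formula
  | imp : Formula → Formula → Formula
  | all : ℕ → Formula → Formula
  | ex : ℕ → Formula → Formula
  deriving DecidableEq

/-- The primitive symbols of the language (finitely many apart from the variables). -/
inductive Symbol : Type
  | zero : Symbol
  | succ : Symbol
  | plus : Symbol
  | times : Symbol
  | eqs : Symbol
  | lts : Symbol
  | nots : Symbol
  | ands : Symbol
  | ors : Symbol
  | imps : Symbol
  | alls : Symbol
  | exs : Symbol
  | var : ℕ → Symbol
  deriving DecidableEq

/-- Gödel numbers of the primitive symbols. -/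
def Symbol.code : Symbol → ℕ
  | .zero => 1
  | .succ => 2
  | .plus => 3
  | .times => 4
  | .eqs => 5
  | .lts => 6
  | .nots => 7
  | .ands => 8
  | .ors => 9
  | .imps => 10
  | .alls => 11
  | .exs => 12
  | .var n => 13 + n

/-- The sequence of symbols occurring in a term. -/
def Term.symbols : Term → List Symbol
  | .var i => [.var i]
  | .zero => [.zero]
  | .succ t => .succ :: t.symbols
  | .add t u => t.symbols ++ .plus :: u.symbols
  | .mul t u => t.symbols ++ .times :: u.symbols

/-- The sequence of symbols occurring in a formula. -/
def Formula.symbols : Formula → List Symbol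
  | .eq t u => t.symbols ++ .eqs :: u.symbols
  | .lt t u => t.symbols ++ .lts :: u.symbols
  | .not φ => .nots :: φ.symbols
  | .and φ ψ => φ.symbols ++ .ands :: ψ.symbols
  | .or φ ψ => φ.symbols ++ .ors :: ψ.symbols
  | .imp φ ψ => φ.symbols ++ .imps :: ψ.symbols
  | .all i φ => .alls :: .var i :: φ.symbols
  | .ex i φ => .exs :: .var i :: φ.symbols

/-- |e| : the length (number of symbols) of a term. -/
def Term.length (t : Term) : ℕ := t.symbols.length

/-- |μ| : the length (number of symbols) of a formula. -/
def Formula.length (φ : Formula) : ℕ := φ.symbols.length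

/-- A fixed standard (pairing-based, injective) Gödel numbering of terms. -/
def Term.code : Term → ℕ
  | .var i => Nat.pair 0 i
  | .zero => Nat.pair 1 0
  | .succ t => Nat.pair 2 t.code
  | .add t u => Nat.pair 3 (Nat.pair t.code u.code)
  | .mul t u => Nat.pair 4 (Nat.pair t.code u.code)

/-- ⌜μ⌝ : the Gödel number of a formula. -/
def Formula.gnum : Formula → ℕ
  | .eq t u => Nat.pair 0 (Nat.pair t.code u.code)
  | .lt t u => Nat.pair 1 (Nat.pair t.code u.code)
  | .not φ => Nat.pair 2 φ.gnum
  | .and φ ψ => Nat.pair 3 (Nat.pair φ.gnum ψ.gnum)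
  | .or φ ψ => Nat.pair 4 (Nat.pair φ.gnum ψ.gnum)
  | .imp φ ψ => Nat.pair 5 (Nat.pair φ.gnum ψ.gnum)
  | .all i φ => Nat.pair 6 (Nat.pair i φ.gnum)
  | .ex i φ => Nat.pair 7 (Nat.pair i φ.gnum)

/-- The variables occurring in a term. -/
def Term.varsOf : Term → Finset ℕ
  | .var i => {i}
  | .zero => ∅
  | .succ t => t.varsOf
  | .add t u => t.varsOf ∪ u.varsOf
  | .mul t u => t.varsOf ∪ u.varsOf

/-- All variables (free or bound) occurring in a formula. -/
def Formula.allVars : Formula → Finset ℕ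
  | .eq t u => t.varsOf ∪ u.varsOf
  | .lt t u => t.varsOf ∪ u.varsOf
  | .not φ => φ.allVars
  | .and φ ψ => φ.allVars ∪ ψ.allVars
  | .or φ ψ => φ.allVars ∪ ψ.allVars
  | .imp φ ψ => φ.allVars ∪ ψ.allVars
  | .all i φ => insert i φ.allVars
  | .ex i φ => insert i φ.allVars

/-- The free variables of a formula. -/
def Formula.freeVars : Formula → Finset ℕ
  | .eq t u => t.varsOf ∪ u.varsOf
  | .lt t u => t.varsOf ∪ u.varsOf
  | .not φ => φ.freeVars
  | .and φ ψ => φ.freeVars ∪ ψ.freeVars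
  | .or φ ψ => φ.freeVars ∪ ψ.freeVars
  | .imp φ ψ => φ.freeVars ∪ ψ.freeVars
  | .all i φ => φ.freeVars.erase i
  | .ex i φ => φ.freeVars.erase i

/-- Substitution of a term for a variable in a term. -/
def Term.subst : Term → ℕ → Term → Term
  | .var i, x, s => if i = x then s else .var i
  | .zero, _, _ => .zero
  | .succ t, x, s => .succ (t.subst x s)
  | .add t u, x, s => .add (t.subst x s) (u.subst x s)
  | .mul t u, x, s => .mul (t.subst x s) (u.subst x s)

/-- Substitution of a term for the free occurrences of a variable in a formula. -/
def Formula.subst : Formula → ℕ → Term → Formula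
  | .eq t u, x, s => .eq (t.subst x s) (u.subst x s)
  | .lt t u, x, s => .lt (t.subst x s) (u.subst x s)
  | .not φ, x, s => .not (φ.subst x s)
  | .and φ ψ, x, s => .and (φ.subst x s) (ψ.subst x s)
  | .or φ ψ, x, s => .or (φ.subst x s) (ψ.subst x s)
  | .imp φ ψ, x, s => .imp (φ.subst x s) (ψ.subst x s)
  | .all i φ, x, s => if i = x then .all i φ else .all i (φ.subst x s)
  | .ex i φ, x, s => if i = x then .ex i φ else .ex i (φ.subst x s)

/-- The number of occurrences of a variable in a term. -/
def Term.countOcc : Term → ℕ → ℕ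
  | .var i, x => if i = x then 1 else 0
  | .zero, _ => 0
  | .succ t, x => t.countOcc x
  | .add t u, x => t.countOcc x + u.countOcc x
  | .mul t u, x => t.countOcc x + u.countOcc x

/-- The number of free occurrences of a variable in a formula. -/
def Formula.countFreeOcc : Formula → ℕ → ℕ
  | .eq t u, x => t.countOcc x + u.countOcc x
  | .lt t u, x => t.countOcc x + u.countOcc x
  | .not φ, x => φ.countFreeOcc x
  | .and φ ψ, x => φ.countFreeOcc x + ψ.countFreeOcc x
  | .or φ ψ, x => φ.countFreeOcc x + ψ.countFreeOcc x
  | .imp φ ψ, x => φ.countFreeOcc x + ψ.countFreeOcc x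
  | .all i φ, x => if i = x then 0 else φ.countFreeOcc x
  | .ex i φ, x => if i = x then 0 else φ.countFreeOcc x

/-- The numeral s s … s 0 for a natural number. -/
def numeral : ℕ → Term
  | 0 => .zero
  | n + 1 => .succ (numeral n)

/-- Structures for the language of arithmetic. -/
structure Struct where
  carrier : Type
  zero : carrier
  succ : carrier → carrier
  add : carrier → carrier → carrier
  mul : carrier → carrier → carrier
  lt : carrier → carrier → Prop

/-- The value of a term in a structure under an assignment. -/
def Term.val (M : Struct) (v : ℕ → M.carrier) : Term → M.carrier
  | .var i => v i
  | .zero => M.zero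
  | .succ t => M.succ (Term.val M v t)
  | .add t u => M.add (Term.val M v t) (Term.val M v u)
  | .mul t u => M.mul (Term.val M v t) (Term.val M v u)

/-- Satisfaction of a formula in a structure under an assignment. -/
def Formula.Realize (M : Struct) : (ℕ → M.carrier) → Formula → Prop
  | v, .eq t u => Term.val M v t = Term.val M v u
  | v, .lt t u => M.lt (Term.val M v t) (Term.val M v u)
  | v, .not φ => ¬ Formula.Realize M v φ
  | v, .and φ ψ => Formula.Realize M v φ ∧ Formula.Realize M v ψ
  | v, .or φ ψ => Formula.Realize M v φ ∨ Formula.Realize M v ψ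
  | v, .imp φ ψ => Formula.Realize M v φ → Formula.Realize M v ψ
  | v, .all i φ => ∀ a : M.carrier, Formula.Realize M (Function.update v i a) φ
  | v, .ex i φ => ∃ a : M.carrier, Formula.Realize M (Function.update v i a) φ

/-- ω : the standard model of arithmetic. -/
@[reducible] def stdModel : Struct :=
  { carrier := ℕ, zero := 0, succ := Nat.succ, add := (· + ·), mul := (· * ·),
    lt := (· < ·) }

/-- A formula is true if it holds in the standard model ω (under every assignment). -/
def IsTrue (φ : Formula) : Prop := ∀ v : ℕ → ℕ, Formula.Realize stdModel v φ

/-- The value of a (closed) term in the standard model ω. -/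
def Term.valNat (t : Term) : ℕ := Term.val stdModel (fun _ => 0) t

/-- A sentence is a formula with no free variables. -/
def Formula.IsSentence (φ : Formula) : Prop := φ.freeVars = ∅

/-- Provability from a theory; by the Gödel completeness theorem, identified with
semantic consequence. -/
def Proves (T : Set Formula) (φ : Formula) : Prop :=
  ∀ (M : Struct) (v : ℕ → M.carrier),
    (∀ ψ ∈ T, Formula.Realize M v ψ) → Formula.Realize M v φ

/-- Consistency: no formula is both provable and refutable. -/
def Consistent (T : Set Formula) : Prop :=
  ¬ ∃ φ : Formula, Proves T φ ∧ Proves T (.not φ)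

/-- The biconditional, as an abbreviation. -/
def Formula.iffF (φ ψ : Formula) : Formula := .and (.imp φ ψ) (.imp ψ φ)

def v0 : Term := .var 0
def v1 : Term := .var 1
def v2 : Term := .var 2

/-- The axioms of Robinson arithmetic Q (with < defined as usual). -/
def QAxioms : Set Formula :=
  { .all 0 (.all 1 (.imp (.eq (.succ v0) (.succ v1)) (.eq v0 v1))),
    .all 0 (.not (.eq (.succ v0) .zero)),
    .all 0 (.imp (.not (.eq v0 .zero)) (.ex 1 (.eq v0 (.succ v1)))),
    .all 0 (.eq (.add v0 .zero) v0),
    .all 0 (.all 1 (.eq (.add v0 (.succ v1)) (.succ (.add v0 v1)))),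
    .all 0 (.eq (.mul v0 .zero) .zero),
    .all 0 (.all 1 (.eq (.mul v0 (.succ v1)) (.add (.mul v0 v1) v0))),
    .all 0 (.all 1 (Formula.iffF (.lt v0 v1) (.ex 2 (.eq (.add v2 (.succ v0)) v1)))) }

/-- Pr_S : the set of Gödel numbers of sentences provable in S. -/
def PrSet (T : Set Formula) : Set ℕ :=
  {m | ∃ σ : Formula, σ.IsSentence ∧ Proves T σ ∧ m = σ.gnum}

/-- A formula μ with at most the free variable v₀ names the number i in T
if T ⊢ (∀v₀)(μ(v₀) ↔ v₀ = i). -/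
def Names (T : Set Formula) (μ : Formula) (i : ℕ) : Prop :=
  μ.freeVars ⊆ {0} ∧ Proves T (.all 0 (Formula.iffF μ (.eq v0 (numeral i))))

/-- i is named in T by some formula of length < m. -/
def Nameable (T : Set Formula) (m i : ℕ) : Prop :=
  ∃ μ : Formula, μ.length < m ∧ Names T μ i

/-- φ(v₀) defines the set A in the standard model ω. -/
def DefinesSet (φ : Formula) (A : Set ℕ) : Prop :=
  φ.freeVars ⊆ {0} ∧ ∀ i : ℕ, i ∈ A ↔ IsTrue (φ.subst 0 (numeral i))

/-- A set of natural numbers is definable (in ω). -/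
def Definable (A : Set ℕ) : Prop := ∃ φ : Formula, DefinesSet φ A

/-- φ(v₀,v₁) defines the binary relation R in the standard model ω. -/
def DefinesRel (φ : Formula) (R : ℕ → ℕ → Prop) : Prop :=
  φ.freeVars ⊆ {0, 1} ∧
    ∀ i j : ℕ, R i j ↔ IsTrue ((φ.subst 0 (numeral i)).subst 1 (numeral j))

/-- The relation B of Boolos's construction: (i,j) ∈ B iff some formula μ with at most
the free variable v₀, with ⌜μ⌝ < g(j) and |μ| < j, names i. -/
def BRel (T : Set Formula) (g : ℕ → ℕ) (i j : ℕ) : Prop :=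
  ∃ μ : Formula, μ.gnum < g j ∧ μ.length < j ∧ Names T μ i

/-- g is a recursive function bounding Gödel numbers in terms of length, as in the
construction: whenever all variables of μ are among the first j ones and |μ| < j,
we have ⌜μ⌝ < g(j). -/
def GoodBound (g : ℕ → ℕ) : Prop :=
  Computable g ∧
    ∀ (μ : Formula) (j : ℕ), μ.allVars ⊆ Finset.range j → μ.length < j → μ.gnum < g j

/-- ψ(v₀,v₁) ≔ ¬φ(v₀,v₁) ∧ (∀v₂ < v₀) φ(v₂,v₁). -/
def psiOf (φ : Formula) : Formula :=
  .and (.not φ) (.all 2 (.imp (.lt v2 v0) (φ.subst 0 v2)))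

/-- The closed term t ≔ 10·(k·k). -/
def tTerm (k : ℕ) : Term := .mul (numeral 10) (.mul (numeral k) (numeral k))

/-- T is recursively axiomatizable: it has an axiom set (of sentences) whose set of
Gödel numbers is recursive and which has the same theorems as T. -/
def RecursivelyAxiomatizable (T : Set Formula) : Prop :=
  ∃ A : Set Formula, (∀ σ ∈ A, σ.IsSentence) ∧
    ComputablePred (fun m : ℕ => ∃ σ ∈ A, m = σ.gnum) ∧
    ∀ φ : Formula, Proves A φ ↔ Proves T φ

/-- Δ₀ (bounded) formulas. -/
inductive IsDelta0 : Formula → Prop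
  | eq (t u : Term) : IsDelta0 (.eq t u)
  | lt (t u : Term) : IsDelta0 (.lt t u)
  | not {φ : Formula} : IsDelta0 φ → IsDelta0 (.not φ)
  | and {φ ψ : Formula} : IsDelta0 φ → IsDelta0 ψ → IsDelta0 (.and φ ψ)
  | or {φ ψ : Formula} : IsDelta0 φ → IsDelta0 ψ → IsDelta0 (.or φ ψ)
  | imp {φ ψ : Formula} : IsDelta0 φ → IsDelta0 ψ → IsDelta0 (.imp φ ψ)
  | ball {φ : Formula} (i : ℕ) (t : Term) : i ∉ t.varsOf → IsDelta0 φ →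
      IsDelta0 (.all i (.imp (.lt (.var i) t) φ))
  | bex {φ : Formula} (i : ℕ) (t : Term) : i ∉ t.varsOf → IsDelta0 φ →
      IsDelta0 (.ex i (.and (.lt (.var i) t) φ))

/-- A formula is Σ₁ if it is of the form (∃vᵢ)μ for a Δ₀ formula μ. -/
def IsSigma1 (φ : Formula) : Prop := ∃ (i : ℕ) (μ : Formula), IsDelta0 μ ∧ φ = .ex i μ

/-! ### Auxiliary semantic lemmas -/

theorem Term.val_agree {M : Struct} {v w : ℕ → M.carrier} :
    ∀ {t : Term}, (∀ x ∈ t.varsOf, v x = w x) → t.val M v = t.val M w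
  | .var i, h => h i (by simp [Term.varsOf])
  | .zero, _ => rfl
  | .succ t, h => by
      simp only [Term.val]; exact congrArg M.succ (Term.val_agree (fun x hx => h x hx))
  | .add t u, h => by
      simp only [Term.val]
      rw [Term.val_agree (fun x hx => h x (by simp [Term.varsOf, hx])),
        Term.val_agree (t := u) (fun x hx => h x (by simp [Term.varsOf, hx]))]
  | .mul t u, h => by
      simp only [Term.val]
      rw [Term.val_agree (fun x hx => h x (by simp [Term.varsOf, hx])),
        Term.val_agree (t := u) (fun x hx => h x (by simp [Term.varsOf, hx]))]

theorem Formula.realize_agree {M : Struct} :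
    ∀ {φ : Formula} {v w : ℕ → M.carrier}, (∀ x ∈ φ.freeVars, v x = w x) →
      (Formula.Realize M v φ ↔ Formula.Realize M w φ)
  | .eq t u, v, w, h => by
      simp only [Formula.Realize]
      rw [Term.val_agree (v := v) (w := w) (fun x hx => h x (by simp [Formula.freeVars, hx])),
        Term.val_agree (t := u) (v := v) (w := w) (fun x hx => h x (by simp [Formula.freeVars, hx]))]
  | .lt t u, v, w, h => by
      simp only [Formula.Realize]
      rw [Term.val_agree (v := v) (w := w) (fun x hx => h x (by simp [Formula.freeVars, hx])),
        Term.val_agree (t := u) (v := v) (w := w) (fun x hx => h x (by simp [Formula.freeVars, hx]))]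
  | .not φ, v, w, h => by
      simp only [Formula.Realize]
      rw [Formula.realize_agree (φ := φ) (fun x hx => h x hx)]
  | .and φ ψ, v, w, h => by
      simp only [Formula.Realize]
      rw [Formula.realize_agree (φ := φ) (fun x hx => h x (by simp [Formula.freeVars, hx])),
        Formula.realize_agree (φ := ψ) (fun x hx => h x (by simp [Formula.freeVars, hx]))]
  | .or φ ψ, v, w, h => by
      simp only [Formula.Realize]
      rw [Formula.realize_agree (φ := φ) (fun x hx => h x (by simp [Formula.freeVars, hx])),
        Formula.realize_agree (φ := ψ) (fun x hx => h x (by simp [Formula.freeVars, hx]))]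
  | .imp φ ψ, v, w, h => by
      simp only [Formula.Realize]
      rw [Formula.realize_agree (φ := φ) (fun x hx => h x (by simp [Formula.freeVars, hx])),
        Formula.realize_agree (φ := ψ) (fun x hx => h x (by simp [Formula.freeVars, hx]))]
  | .all i φ, v, w, h => by
      simp only [Formula.Realize]
      refine forall_congr' fun a => Formula.realize_agree (φ := φ) fun x hx => ?_
      rcases eq_or_ne x i with rfl | hxi
      · simp [Function.update]
      · simp only [Function.update, dif_neg hxi]
        exact h x (by simp [Formula.freeVars, Finset.mem_erase, hxi, hx])
  | .ex i φ, v, w, h => by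
      simp only [Formula.Realize]
      refine exists_congr fun a => Formula.realize_agree (φ := φ) fun x hx => ?_
      rcases eq_or_ne x i with rfl | hxi
      · simp [Function.update]
      · simp only [Function.update, dif_neg hxi]
        exact h x (by simp [Formula.freeVars, Finset.mem_erase, hxi, hx])

theorem Term.val_subst {M : Struct} {v : ℕ → M.carrier} {x : ℕ} {s : Term} :
    ∀ t : Term, (t.subst x s).val M v = t.val M (Function.update v x (s.val M v))
  | .var i => by
      rcases eq_or_ne i x with rfl | h
      · simp [Term.subst, Term.val, Function.update]
      · simp [Term.subst, Term.val, Function.update, h]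
  | .zero => rfl
  | .succ t => by simp [Term.subst, Term.val, Term.val_subst t]
  | .add t u => by simp [Term.subst, Term.val, Term.val_subst t, Term.val_subst u]
  | .mul t u => by simp [Term.subst, Term.val, Term.val_subst t, Term.val_subst u]

theorem Formula.realize_subst {M : Struct} {x : ℕ} {s : Term} :
    ∀ {φ : Formula}, (∀ y ∈ s.varsOf, y ∉ φ.allVars) → ∀ {v : ℕ → M.carrier},
      (Formula.Realize M v (φ.subst x s) ↔
        Formula.Realize M (Function.update v x (s.val M v)) φ)
  | .eq t u, _, v => by simp [Formula.subst, Formula.Realize, Term.val_subst]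
  | .lt t u, _, v => by simp [Formula.subst, Formula.Realize, Term.val_subst]
  | .not φ, h, v => by
      simp only [Formula.subst, Formula.Realize]
      rw [Formula.realize_subst (φ := φ) h]
  | .and φ ψ, h, v => by
      simp only [Formula.subst, Formula.Realize]
      rw [Formula.realize_subst (φ := φ) (fun y hy => fun hc => h y hy (by simp [Formula.allVars, hc])),
        Formula.realize_subst (φ := ψ) (fun y hy => fun hc => h y hy (by simp [Formula.allVars, hc]))]
  | .or φ ψ, h, v => by
      simp only [Formula.subst, Formula.Realize]
      rw [Formula.realize_subst (φ := φ) (fun y hy => fun hc => h y hy (by simp [Formula.allVars, hc])),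
        Formula.realize_subst (φ := ψ) (fun y hy => fun hc => h y hy (by simp [Formula.allVars, hc]))]
  | .imp φ ψ, h, v => by
      simp only [Formula.subst, Formula.Realize]
      rw [Formula.realize_subst (φ := φ) (fun y hy => fun hc => h y hy (by simp [Formula.allVars, hc])),
        Formula.realize_subst (φ := ψ) (fun y hy => fun hc => h y hy (by simp [Formula.allVars, hc]))]
  | .all i φ, h, v => by
      rcases eq_or_ne i x with rfl | hix
      · simp only [Formula.subst, if_pos rfl, Formula.Realize]
        refine forall_congr' fun a => Formula.realize_agree fun y hy => ?_
        rcases eq_or_ne y i with rfl | hyi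
        · simp [Function.update]
        · simp [Function.update, hyi]
      · simp only [Formula.subst, if_neg hix, Formula.Realize]
        refine forall_congr' fun a => ?_
        rw [Formula.realize_subst (φ := φ)
          (fun y hy => fun hc => h y hy (by simp [Formula.allVars, hc]))]
        have hs : s.val M (Function.update v i a) = s.val M v :=
          Term.val_agree fun y hy => by
            have : y ≠ i := fun hyi => h y hy (by simp [Formula.allVars, hyi])
            simp [Function.update, this]
        rw [hs]
        refine Formula.realize_agree fun y hy => ?_
        rcases eq_or_ne y x with rfl | hyx
        · simp [Function.update, hix, Ne.symm hix]
        · rcases eq_or_ne y i with rfl | hyi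
          · simp [Function.update, hyx]
          · simp [Function.update, hyx, hyi]
  | .ex i φ, h, v => by
      rcases eq_or_ne i x with rfl | hix
      · simp only [Formula.subst, if_pos rfl, Formula.Realize]
        refine exists_congr fun a => Formula.realize_agree fun y hy => ?_
        rcases eq_or_ne y i with rfl | hyi
        · simp [Function.update]
        · simp [Function.update, hyi]
      · simp only [Formula.subst, if_neg hix, Formula.Realize]
        refine exists_congr fun a => ?_
        rw [Formula.realize_subst (φ := φ)
          (fun y hy => fun hc => h y hy (by simp [Formula.allVars, hc]))]
        have hs : s.val M (Function.update v i a) = s.val M v :=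
          Term.val_agree fun y hy => by
            have : y ≠ i := fun hyi => h y hy (by simp [Formula.allVars, hyi])
            simp [Function.update, this]
        rw [hs]
        refine Formula.realize_agree fun y hy => ?_
        rcases eq_or_ne y x with rfl | hyx
        · simp [Function.update, hix, Ne.symm hix]
        · rcases eq_or_ne y i with rfl | hyi
          · simp [Function.update, hyx]
          · simp [Function.update, hyx, hyi]


/-! ### Numerals and lengths -/

@[simp] theorem Term.varsOf_numeral (n : ℕ) : (numeral n).varsOf = ∅ := by
  induction n with
  | zero => rfl
  | succ n ih => simpa [numeral, Term.varsOf] using ih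

@[simp] theorem Term.length_numeral (n : ℕ) : (numeral n).length = n + 1 := by
  induction n with
  | zero => rfl
  | succ n ih => simp [numeral, Term.length, Term.symbols] at ih ⊢; omega

theorem Term.length_pos : ∀ t : Term, 0 < t.length
  | .var _ => by simp [Term.length, Term.symbols]
  | .zero => by simp [Term.length, Term.symbols]
  | .succ t => by simp [Term.length, Term.symbols]
  | .add t u => by simp [Term.length, Term.symbols]
  | .mul t u => by simp [Term.length, Term.symbols]

theorem Term.length_subst (x : ℕ) (s : Term) :
    ∀ t : Term, (t.subst x s).length ≤ t.length + t.countOcc x * s.length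
  | .var i => by
      rcases eq_or_ne i x with rfl | h
      · simp [Term.subst, Term.countOcc, Term.length, Term.symbols]
      · simp [Term.subst, Term.countOcc, h, Term.length, Term.symbols]
  | .zero => by simp [Term.subst, Term.countOcc]
  | .succ t => by
      have := Term.length_subst x s t
      simp [Term.subst, Term.countOcc, Term.length, Term.symbols] at this ⊢; omega
  | .add t u => by
      have h1 := Term.length_subst x s t
      have h2 := Term.length_subst x s u
      simp [Term.subst, Term.countOcc, Term.length, Term.symbols] at h1 h2 ⊢
      nlinarith
  | .mul t u => by
      have h1 := Term.length_subst x s t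
      have h2 := Term.length_subst x s u
      simp [Term.subst, Term.countOcc, Term.length, Term.symbols] at h1 h2 ⊢
      nlinarith

theorem Formula.length_subst (x : ℕ) (s : Term) :
    ∀ φ : Formula, (φ.subst x s).length ≤ φ.length + φ.countFreeOcc x * s.length
  | .eq t u => by
      have h1 := Term.length_subst x s t
      have h2 := Term.length_subst x s u
      simp [Formula.subst, Formula.countFreeOcc, Formula.length, Formula.symbols,
        Term.length] at h1 h2 ⊢
      nlinarith
  | .lt t u => by
      have h1 := Term.length_subst x s t
      have h2 := Term.length_subst x s u
      simp [Formula.subst, Formula.countFreeOcc, Formula.length, Formula.symbols,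
        Term.length] at h1 h2 ⊢
      nlinarith
  | .not φ => by
      have := Formula.length_subst x s φ
      simp [Formula.subst, Formula.countFreeOcc, Formula.length, Formula.symbols] at this ⊢
      omega
  | .and φ ψ => by
      have h1 := Formula.length_subst x s φ
      have h2 := Formula.length_subst x s ψ
      simp [Formula.subst, Formula.countFreeOcc, Formula.length, Formula.symbols] at h1 h2 ⊢
      nlinarith
  | .or φ ψ => by
      have h1 := Formula.length_subst x s φ
      have h2 := Formula.length_subst x s ψ
      simp [Formula.subst, Formula.countFreeOcc, Formula.length, Formula.symbols] at h1 h2 ⊢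
      nlinarith
  | .imp φ ψ => by
      have h1 := Formula.length_subst x s φ
      have h2 := Formula.length_subst x s ψ
      simp [Formula.subst, Formula.countFreeOcc, Formula.length, Formula.symbols] at h1 h2 ⊢
      nlinarith
  | .all i φ => by
      have := Formula.length_subst x s φ
      rcases eq_or_ne i x with rfl | h
      · simp [Formula.subst, Formula.countFreeOcc, Formula.length, Formula.symbols]
      · simp [Formula.subst, Formula.countFreeOcc, h, Formula.length,
          Formula.symbols] at this ⊢
        omega
  | .ex i φ => by
      have := Formula.length_subst x s φ
      rcases eq_or_ne i x with rfl | h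
      · simp [Formula.subst, Formula.countFreeOcc, Formula.length, Formula.symbols]
      · simp [Formula.subst, Formula.countFreeOcc, h, Formula.length,
          Formula.symbols] at this ⊢
        omega

theorem Term.varsOf_subst (x : ℕ) (s : Term) :
    ∀ t : Term, (t.subst x s).varsOf ⊆ (t.varsOf.erase x) ∪ s.varsOf
  | .var i => by
      rcases eq_or_ne i x with rfl | h
      · simp [Term.subst, Term.varsOf]
      · simp [Term.subst, h, Term.varsOf, Finset.subset_iff, h]
  | .zero => by simp [Term.subst, Term.varsOf]
  | .succ t => Term.varsOf_subst x s t
  | .add t u => by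
      have h1 := Term.varsOf_subst x s t
      have h2 := Term.varsOf_subst x s u
      simp only [Term.subst, Term.varsOf]
      intro y hy
      rcases Finset.mem_union.1 hy with hy | hy
      · rcases Finset.mem_union.1 (h1 hy) with hy | hy
        · exact Finset.mem_union.2 (Or.inl (by
            rw [Finset.mem_erase] at hy ⊢; exact ⟨hy.1, Finset.mem_union.2 (Or.inl hy.2)⟩))
        · exact Finset.mem_union.2 (Or.inr hy)
      · rcases Finset.mem_union.1 (h2 hy) with hy | hy
        · exact Finset.mem_union.2 (Or.inl (by
            rw [Finset.mem_erase] at hy ⊢; exact ⟨hy.1, Finset.mem_union.2 (Or.inr hy.2)⟩))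
        · exact Finset.mem_union.2 (Or.inr hy)
  | .mul t u => by
      have h1 := Term.varsOf_subst x s t
      have h2 := Term.varsOf_subst x s u
      simp only [Term.subst, Term.varsOf]
      intro y hy
      rcases Finset.mem_union.1 hy with hy | hy
      · rcases Finset.mem_union.1 (h1 hy) with hy | hy
        · exact Finset.mem_union.2 (Or.inl (by
            rw [Finset.mem_erase] at hy ⊢; exact ⟨hy.1, Finset.mem_union.2 (Or.inl hy.2)⟩))
        · exact Finset.mem_union.2 (Or.inr hy)
      · rcases Finset.mem_union.1 (h2 hy) with hy | hy
        · exact Finset.mem_union.2 (Or.inl (by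
            rw [Finset.mem_erase] at hy ⊢; exact ⟨hy.1, Finset.mem_union.2 (Or.inr hy.2)⟩))
        · exact Finset.mem_union.2 (Or.inr hy)

theorem Formula.freeVars_subst (x : ℕ) (s : Term) :
    ∀ φ : Formula, (φ.subst x s).freeVars ⊆ (φ.freeVars.erase x) ∪ s.varsOf := by
  intro φ
  induction φ with
  | eq t u =>
      simp only [Formula.subst, Formula.freeVars]
      intro y hy
      rcases Finset.mem_union.1 hy with hy | hy
      · rcases Finset.mem_union.1 (Term.varsOf_subst x s t hy) with hy | hy
        · exact Finset.mem_union.2 (Or.inl (by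
            rw [Finset.mem_erase] at hy ⊢; exact ⟨hy.1, Finset.mem_union.2 (Or.inl hy.2)⟩))
        · exact Finset.mem_union.2 (Or.inr hy)
      · rcases Finset.mem_union.1 (Term.varsOf_subst x s u hy) with hy | hy
        · exact Finset.mem_union.2 (Or.inl (by
            rw [Finset.mem_erase] at hy ⊢; exact ⟨hy.1, Finset.mem_union.2 (Or.inr hy.2)⟩))
        · exact Finset.mem_union.2 (Or.inr hy)
  | lt t u =>
      simp only [Formula.subst, Formula.freeVars]
      intro y hy
      rcases Finset.mem_union.1 hy with hy | hy
      · rcases Finset.mem_union.1 (Term.varsOf_subst x s t hy) with hy | hy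
        · exact Finset.mem_union.2 (Or.inl (by
            rw [Finset.mem_erase] at hy ⊢; exact ⟨hy.1, Finset.mem_union.2 (Or.inl hy.2)⟩))
        · exact Finset.mem_union.2 (Or.inr hy)
      · rcases Finset.mem_union.1 (Term.varsOf_subst x s u hy) with hy | hy
        · exact Finset.mem_union.2 (Or.inl (by
            rw [Finset.mem_erase] at hy ⊢; exact ⟨hy.1, Finset.mem_union.2 (Or.inr hy.2)⟩))
        · exact Finset.mem_union.2 (Or.inr hy)
  | not φ ih => exact ih
  | and φ ψ ih1 ih2 =>
      simp only [Formula.subst, Formula.freeVars]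
      intro y hy
      rcases Finset.mem_union.1 hy with hy | hy
      · rcases Finset.mem_union.1 (ih1 hy) with hy | hy
        · exact Finset.mem_union.2 (Or.inl (by
            rw [Finset.mem_erase] at hy ⊢; exact ⟨hy.1, Finset.mem_union.2 (Or.inl hy.2)⟩))
        · exact Finset.mem_union.2 (Or.inr hy)
      · rcases Finset.mem_union.1 (ih2 hy) with hy | hy
        · exact Finset.mem_union.2 (Or.inl (by
            rw [Finset.mem_erase] at hy ⊢; exact ⟨hy.1, Finset.mem_union.2 (Or.inr hy.2)⟩))
        · exact Finset.mem_union.2 (Or.inr hy)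
  | or φ ψ ih1 ih2 =>
      simp only [Formula.subst, Formula.freeVars]
      intro y hy
      rcases Finset.mem_union.1 hy with hy | hy
      · rcases Finset.mem_union.1 (ih1 hy) with hy | hy
        · exact Finset.mem_union.2 (Or.inl (by
            rw [Finset.mem_erase] at hy ⊢; exact ⟨hy.1, Finset.mem_union.2 (Or.inl hy.2)⟩))
        · exact Finset.mem_union.2 (Or.inr hy)
      · rcases Finset.mem_union.1 (ih2 hy) with hy | hy
        · exact Finset.mem_union.2 (Or.inl (by
            rw [Finset.mem_erase] at hy ⊢; exact ⟨hy.1, Finset.mem_union.2 (Or.inr hy.2)⟩))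
        · exact Finset.mem_union.2 (Or.inr hy)
  | imp φ ψ ih1 ih2 =>
      simp only [Formula.subst, Formula.freeVars]
      intro y hy
      rcases Finset.mem_union.1 hy with hy | hy
      · rcases Finset.mem_union.1 (ih1 hy) with hy | hy
        · exact Finset.mem_union.2 (Or.inl (by
            rw [Finset.mem_erase] at hy ⊢; exact ⟨hy.1, Finset.mem_union.2 (Or.inl hy.2)⟩))
        · exact Finset.mem_union.2 (Or.inr hy)
      · rcases Finset.mem_union.1 (ih2 hy) with hy | hy
        · exact Finset.mem_union.2 (Or.inl (by
            rw [Finset.mem_erase] at hy ⊢; exact ⟨hy.1, Finset.mem_union.2 (Or.inr hy.2)⟩))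
        · exact Finset.mem_union.2 (Or.inr hy)
  | all i φ ih =>
      rcases eq_or_ne i x with rfl | h
      · simp only [Formula.subst, if_pos rfl, ↓reduceIte, Formula.freeVars]
        intro y hy
        exact Finset.mem_union.2 (Or.inl (by
          rw [Finset.mem_erase] at hy ⊢
          exact ⟨fun hyx => hy.1 hyx, by rw [Finset.mem_erase]; exact hy⟩))
      · simp only [Formula.subst, if_neg h, Formula.freeVars]
        intro y hy
        rw [Finset.mem_erase] at hy
        rcases Finset.mem_union.1 (ih hy.2) with hz | hz
        · exact Finset.mem_union.2 (Or.inl (by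
            rw [Finset.mem_erase] at hz ⊢
            exact ⟨hz.1, by rw [Finset.mem_erase]; exact ⟨hy.1, hz.2⟩⟩))
        · exact Finset.mem_union.2 (Or.inr hz)
  | ex i φ ih =>
      rcases eq_or_ne i x with rfl | h
      · simp only [Formula.subst, if_pos rfl, ↓reduceIte, Formula.freeVars]
        intro y hy
        exact Finset.mem_union.2 (Or.inl (by
          rw [Finset.mem_erase] at hy ⊢
          exact ⟨fun hyx => hy.1 hyx, by rw [Finset.mem_erase]; exact hy⟩))
      · simp only [Formula.subst, if_neg h, Formula.freeVars]
        intro y hy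
        rw [Finset.mem_erase] at hy
        rcases Finset.mem_union.1 (ih hy.2) with hz | hz
        · exact Finset.mem_union.2 (Or.inl (by
            rw [Finset.mem_erase] at hz ⊢
            exact ⟨hz.1, by rw [Finset.mem_erase]; exact ⟨hy.1, hz.2⟩⟩))
        · exact Finset.mem_union.2 (Or.inr hz)


/-! ### Renaming of variables -/

def Term.ren (f : ℕ → ℕ) : Term → Term
  | .var i => .var (f i)
  | .zero => .zero
  | .succ t => .succ (t.ren f)
  | .add t u => .add (t.ren f) (u.ren f)
  | .mul t u => .mul (t.ren f) (u.ren f)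

def Formula.ren (f : ℕ → ℕ) : Formula → Formula
  | .eq t u => .eq (t.ren f) (u.ren f)
  | .lt t u => .lt (t.ren f) (u.ren f)
  | .not φ => .not (φ.ren f)
  | .and φ ψ => .and (φ.ren f) (ψ.ren f)
  | .or φ ψ => .or (φ.ren f) (ψ.ren f)
  | .imp φ ψ => .imp (φ.ren f) (ψ.ren f)
  | .all i φ => .all (f i) (φ.ren f)
  | .ex i φ => .ex (f i) (φ.ren f)

theorem Term.length_ren (f : ℕ → ℕ) : ∀ t : Term, (t.ren f).length = t.length
  | .var i => rfl
  | .zero => rfl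
  | .succ t => by simp [Term.ren, Term.length, Term.symbols] at *; exact Term.length_ren f t
  | .add t u => by
      have h1 := Term.length_ren f t; have h2 := Term.length_ren f u
      simp [Term.ren, Term.length, Term.symbols] at *; omega
  | .mul t u => by
      have h1 := Term.length_ren f t; have h2 := Term.length_ren f u
      simp [Term.ren, Term.length, Term.symbols] at *; omega

theorem Formula.length_ren (f : ℕ → ℕ) : ∀ φ : Formula, (φ.ren f).length = φ.length
  | .eq t u => by
      have h1 := Term.length_ren f t; have h2 := Term.length_ren f u
      simp [Formula.ren, Formula.length, Formula.symbols, Term.length] at h1 h2 ⊢; omega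
  | .lt t u => by
      have h1 := Term.length_ren f t; have h2 := Term.length_ren f u
      simp [Formula.ren, Formula.length, Formula.symbols, Term.length] at h1 h2 ⊢; omega
  | .not φ => by
      have h1 := Formula.length_ren f φ
      simp [Formula.ren, Formula.length, Formula.symbols] at h1 ⊢; omega
  | .and φ ψ => by
      have h1 := Formula.length_ren f φ; have h2 := Formula.length_ren f ψ
      simp [Formula.ren, Formula.length, Formula.symbols] at h1 h2 ⊢; omega
  | .or φ ψ => by
      have h1 := Formula.length_ren f φ; have h2 := Formula.length_ren f ψ
      simp [Formula.ren, Formula.length, Formula.symbols] at h1 h2 ⊢; omega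
  | .imp φ ψ => by
      have h1 := Formula.length_ren f φ; have h2 := Formula.length_ren f ψ
      simp [Formula.ren, Formula.length, Formula.symbols] at h1 h2 ⊢; omega
  | .all i φ => by
      have h1 := Formula.length_ren f φ
      simp [Formula.ren, Formula.length, Formula.symbols] at h1 ⊢; omega
  | .ex i φ => by
      have h1 := Formula.length_ren f φ
      simp [Formula.ren, Formula.length, Formula.symbols] at h1 ⊢; omega

theorem Term.varsOf_ren (f : ℕ → ℕ) : ∀ t : Term, (t.ren f).varsOf = t.varsOf.image f
  | .var i => by simp [Term.ren, Term.varsOf]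
  | .zero => by simp [Term.ren, Term.varsOf]
  | .succ t => Term.varsOf_ren f t
  | .add t u => by
      simp [Term.ren, Term.varsOf, Term.varsOf_ren f t, Term.varsOf_ren f u,
        Finset.image_union]
  | .mul t u => by
      simp [Term.ren, Term.varsOf, Term.varsOf_ren f t, Term.varsOf_ren f u,
        Finset.image_union]

theorem Formula.allVars_ren (f : ℕ → ℕ) :
    ∀ φ : Formula, (φ.ren f).allVars = φ.allVars.image f
  | .eq t u => by
      simp [Formula.ren, Formula.allVars, Term.varsOf_ren, Finset.image_union]
  | .lt t u => by
      simp [Formula.ren, Formula.allVars, Term.varsOf_ren, Finset.image_union]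
  | .not φ => Formula.allVars_ren f φ
  | .and φ ψ => by
      simp [Formula.ren, Formula.allVars, Formula.allVars_ren f φ, Formula.allVars_ren f ψ,
        Finset.image_union]
  | .or φ ψ => by
      simp [Formula.ren, Formula.allVars, Formula.allVars_ren f φ, Formula.allVars_ren f ψ,
        Finset.image_union]
  | .imp φ ψ => by
      simp [Formula.ren, Formula.allVars, Formula.allVars_ren f φ, Formula.allVars_ren f ψ,
        Finset.image_union]
  | .all i φ => by
      simp [Formula.ren, Formula.allVars, Formula.allVars_ren f φ, Finset.image_insert]
  | .ex i φ => by
      simp [Formula.ren, Formula.allVars, Formula.allVars_ren f φ, Finset.image_insert]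

theorem Formula.freeVars_ren_subset (f : ℕ → ℕ) :
    ∀ φ : Formula, (φ.ren f).freeVars ⊆ φ.freeVars.image f
  | .eq t u => by
      simp [Formula.ren, Formula.freeVars, Term.varsOf_ren, Finset.image_union]
  | .lt t u => by
      simp [Formula.ren, Formula.freeVars, Term.varsOf_ren, Finset.image_union]
  | .not φ => Formula.freeVars_ren_subset f φ
  | .and φ ψ => by
      simp only [Formula.ren, Formula.freeVars, Finset.image_union]
      exact Finset.union_subset_union (Formula.freeVars_ren_subset f φ)
        (Formula.freeVars_ren_subset f ψ)
  | .or φ ψ => by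
      simp only [Formula.ren, Formula.freeVars, Finset.image_union]
      exact Finset.union_subset_union (Formula.freeVars_ren_subset f φ)
        (Formula.freeVars_ren_subset f ψ)
  | .imp φ ψ => by
      simp only [Formula.ren, Formula.freeVars, Finset.image_union]
      exact Finset.union_subset_union (Formula.freeVars_ren_subset f φ)
        (Formula.freeVars_ren_subset f ψ)
  | .all i φ => by
      simp only [Formula.ren, Formula.freeVars]
      intro y hy
      rw [Finset.mem_erase] at hy
      rcases Finset.mem_image.1 (Formula.freeVars_ren_subset f φ hy.2) with ⟨z, hz, rfl⟩
      exact Finset.mem_image.2 ⟨z, Finset.mem_erase.2 ⟨fun hzi => hy.1 (by rw [hzi]), hz⟩, rfl⟩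
  | .ex i φ => by
      simp only [Formula.ren, Formula.freeVars]
      intro y hy
      rw [Finset.mem_erase] at hy
      rcases Finset.mem_image.1 (Formula.freeVars_ren_subset f φ hy.2) with ⟨z, hz, rfl⟩
      exact Finset.mem_image.2 ⟨z, Finset.mem_erase.2 ⟨fun hzi => hy.1 (by rw [hzi]), hz⟩, rfl⟩

theorem Term.val_ren {M : Struct} (f : ℕ → ℕ) (v : ℕ → M.carrier) :
    ∀ t : Term, (t.ren f).val M v = t.val M (v ∘ f)
  | .var i => rfl
  | .zero => rfl
  | .succ t => by simp [Term.ren, Term.val, Term.val_ren f v t]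
  | .add t u => by simp [Term.ren, Term.val, Term.val_ren f v t, Term.val_ren f v u]
  | .mul t u => by simp [Term.ren, Term.val, Term.val_ren f v t, Term.val_ren f v u]

theorem Formula.realize_ren {M : Struct} {f : ℕ → ℕ} (hf : Function.Injective f) :
    ∀ (φ : Formula) (v : ℕ → M.carrier),
      Formula.Realize M v (φ.ren f) ↔ Formula.Realize M (v ∘ f) φ
  | .eq t u, v => by simp [Formula.ren, Formula.Realize, Term.val_ren]
  | .lt t u, v => by simp [Formula.ren, Formula.Realize, Term.val_ren]
  | .not φ, v => by
      simp only [Formula.ren, Formula.Realize]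
      rw [Formula.realize_ren hf φ v]
  | .and φ ψ, v => by
      simp only [Formula.ren, Formula.Realize]
      rw [Formula.realize_ren hf φ v, Formula.realize_ren hf ψ v]
  | .or φ ψ, v => by
      simp only [Formula.ren, Formula.Realize]
      rw [Formula.realize_ren hf φ v, Formula.realize_ren hf ψ v]
  | .imp φ ψ, v => by
      simp only [Formula.ren, Formula.Realize]
      rw [Formula.realize_ren hf φ v, Formula.realize_ren hf ψ v]
  | .all i φ, v => by
      simp only [Formula.ren, Formula.Realize]
      refine forall_congr' fun a => ?_
      rw [Formula.realize_ren hf φ]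
      have : (Function.update v (f i) a) ∘ f = Function.update (v ∘ f) i a := by
        funext x
        rcases eq_or_ne x i with rfl | h
        · simp [Function.update]
        · have hne : f x ≠ f i := fun hc => h (hf hc)
          simp [Function.comp, Function.update, h, hne]
      rw [this]
  | .ex i φ, v => by
      simp only [Formula.ren, Formula.Realize]
      refine exists_congr fun a => ?_
      rw [Formula.realize_ren hf φ]
      have : (Function.update v (f i) a) ∘ f = Function.update (v ∘ f) i a := by
        funext x
        rcases eq_or_ne x i with rfl | h
        · simp [Function.update]
        · have hne : f x ≠ f i := fun hc => h (hf hc)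
          simp [Function.comp, Function.update, h, hne]
      rw [this]

theorem Term.card_varsOf_le : ∀ t : Term, t.varsOf.card ≤ t.length
  | .var i => by simp [Term.varsOf, Term.length, Term.symbols]
  | .zero => by simp [Term.varsOf]
  | .succ t => le_trans (Term.card_varsOf_le t) (by simp [Term.length, Term.symbols])
  | .add t u => by
      have h1 := Term.card_varsOf_le t; have h2 := Term.card_varsOf_le u
      calc (t.varsOf ∪ u.varsOf).card ≤ t.varsOf.card + u.varsOf.card :=
            Finset.card_union_le _ _
        _ ≤ (Term.add t u).length := by
            simp [Term.length, Term.symbols] at h1 h2 ⊢; omega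
  | .mul t u => by
      have h1 := Term.card_varsOf_le t; have h2 := Term.card_varsOf_le u
      calc (t.varsOf ∪ u.varsOf).card ≤ t.varsOf.card + u.varsOf.card :=
            Finset.card_union_le _ _
        _ ≤ (Term.mul t u).length := by
            simp [Term.length, Term.symbols] at h1 h2 ⊢; omega

theorem Formula.card_allVars_le : ∀ φ : Formula, φ.allVars.card ≤ φ.length
  | .eq t u => by
      have h1 := Term.card_varsOf_le t; have h2 := Term.card_varsOf_le u
      calc (t.varsOf ∪ u.varsOf).card ≤ t.varsOf.card + u.varsOf.card :=
            Finset.card_union_le _ _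
        _ ≤ _ := by simp [Formula.length, Formula.symbols, Term.length] at h1 h2 ⊢; omega
  | .lt t u => by
      have h1 := Term.card_varsOf_le t; have h2 := Term.card_varsOf_le u
      calc (t.varsOf ∪ u.varsOf).card ≤ t.varsOf.card + u.varsOf.card :=
            Finset.card_union_le _ _
        _ ≤ _ := by simp [Formula.length, Formula.symbols, Term.length] at h1 h2 ⊢; omega
  | .not φ => le_trans (Formula.card_allVars_le φ)
      (by simp [Formula.length, Formula.symbols])
  | .and φ ψ => by
      have h1 := Formula.card_allVars_le φ; have h2 := Formula.card_allVars_le ψ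
      calc (φ.allVars ∪ ψ.allVars).card ≤ φ.allVars.card + ψ.allVars.card :=
            Finset.card_union_le _ _
        _ ≤ _ := by simp [Formula.length, Formula.symbols] at h1 h2 ⊢; omega
  | .or φ ψ => by
      have h1 := Formula.card_allVars_le φ; have h2 := Formula.card_allVars_le ψ
      calc (φ.allVars ∪ ψ.allVars).card ≤ φ.allVars.card + ψ.allVars.card :=
            Finset.card_union_le _ _
        _ ≤ _ := by simp [Formula.length, Formula.symbols] at h1 h2 ⊢; omega
  | .imp φ ψ => by
      have h1 := Formula.card_allVars_le φ; have h2 := Formula.card_allVars_le ψ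
      calc (φ.allVars ∪ ψ.allVars).card ≤ φ.allVars.card + ψ.allVars.card :=
            Finset.card_union_le _ _
        _ ≤ _ := by simp [Formula.length, Formula.symbols] at h1 h2 ⊢; omega
  | .all i φ => by
      have h := Formula.card_allVars_le φ
      calc (insert i φ.allVars).card ≤ φ.allVars.card + 1 := Finset.card_insert_le _ _
        _ ≤ _ := by simp [Formula.length, Formula.symbols] at h ⊢; omega
  | .ex i φ => by
      have h := Formula.card_allVars_le φ
      calc (insert i φ.allVars).card ≤ φ.allVars.card + 1 := Finset.card_insert_le _ _
        _ ≤ _ := by simp [Formula.length, Formula.symbols] at h ⊢; omega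

/-- The "rank" renaming: maps elements of `S` to their rank in `S`, and everything
else injectively above `j`. -/
def rankFun (S : Finset ℕ) (j : ℕ) (x : ℕ) : ℕ :=
  if x ∈ S then (S.filter (· < x)).card else j + x

theorem rankFun_lt {S : Finset ℕ} {j : ℕ} (hS : S.card ≤ j) {x : ℕ} (hx : x ∈ S) :
    rankFun S j x < j := by
  rw [rankFun, if_pos hx]
  have : (S.filter (· < x)).card < S.card := by
    refine Finset.card_lt_card ?_
    rw [Finset.ssubset_iff_of_subset (Finset.filter_subset _ _)]
    exact ⟨x, hx, by simp⟩
  omega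

theorem rankFun_injective {S : Finset ℕ} {j : ℕ} (hS : S.card ≤ j) :
    Function.Injective (rankFun S j) := by
  have mono : ∀ {x y : ℕ}, x ∈ S → y ∈ S → x < y → rankFun S j x < rankFun S j y := by
    intro x y hx hy hxy
    rw [rankFun, if_pos hx, rankFun, if_pos hy]
    refine Finset.card_lt_card ?_
    rw [Finset.ssubset_iff_of_subset]
    · exact ⟨x, by simp [hx, hxy], by simp⟩
    · intro z hz
      simp only [Finset.mem_filter] at hz ⊢
      exact ⟨hz.1, hz.2.trans hxy⟩
  intro x y hxy
  by_cases hx : x ∈ S <;> by_cases hy : y ∈ S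
  · rcases lt_trichotomy x y with h | h | h
    · exact absurd hxy (Nat.ne_of_lt (mono hx hy h))
    · exact h
    · exact absurd hxy.symm (Nat.ne_of_lt (mono hy hx h))
  · have h1 := rankFun_lt hS hx
    rw [show rankFun S j y = j + y from if_neg hy] at hxy
    omega
  · have h1 := rankFun_lt hS hy
    rw [show rankFun S j x = j + x from if_neg hx] at hxy
    omega
  · rw [show rankFun S j x = j + x from if_neg hx,
      show rankFun S j y = j + y from if_neg hy] at hxy
    omega

theorem rankFun_zero {S : Finset ℕ} {j : ℕ} (h0 : 0 ∈ S) : rankFun S j 0 = 0 := by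
  rw [rankFun, if_pos h0]
  simp


/-! ### Models of Q -/

def Struct.emb (M : Struct) : ℕ → M.carrier
  | 0 => M.zero
  | n + 1 => M.succ (M.emb n)

theorem Term.val_numeral {M : Struct} (v : ℕ → M.carrier) (n : ℕ) :
    (numeral n).val M v = M.emb n := by
  induction n with
  | zero => rfl
  | succ n ih => simp [numeral, Term.val, Struct.emb, ih]

theorem Term.val_numeral_std (v : ℕ → ℕ) (n : ℕ) :
    (numeral n).val stdModel v = n := by
  induction n with
  | zero => rfl
  | succ n ih => simp [numeral, Term.val, ih]

section QModel

variable {M : Struct} (hQ : ∀ (v : ℕ → M.carrier) (ψ : Formula), ψ ∈ QAxioms →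
  Formula.Realize M v ψ)

include hQ

theorem Q.succ_inj {a b : M.carrier} (h : M.succ a = M.succ b) : a = b := by
  have := hQ (fun _ => a) _ (show _ ∈ QAxioms from by left; rfl)
  simp only [Formula.Realize, Term.val, v0, v1] at this
  have := this a b
  simp [Function.update] at this
  exact this h

theorem Q.succ_ne_zero (a : M.carrier) : M.succ a ≠ M.zero := by
  have := hQ (fun _ => a) _ (show _ ∈ QAxioms from by right; left; rfl)
  simp only [Formula.Realize, Term.val, v0] at this
  have := this a
  simp [Function.update] at this
  exact this

theorem Q.zero_or_succ (a : M.carrier) : a = M.zero ∨ ∃ b, a = M.succ b := by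
  have := hQ (fun _ => a) _ (show _ ∈ QAxioms from by right; right; left; rfl)
  simp only [Formula.Realize, Term.val, v0, v1] at this
  have := this a
  simp [Function.update] at this
  rcases eq_or_ne a M.zero with h | h
  · exact Or.inl h
  · exact Or.inr (this h)

theorem Q.add_zero (a : M.carrier) : M.add a M.zero = a := by
  have := hQ (fun _ => a) _ (show _ ∈ QAxioms from by right; right; right; left; rfl)
  simp only [Formula.Realize, Term.val, v0] at this
  have := this a
  simpa [Function.update] using this

theorem Q.add_succ (a b : M.carrier) : M.add a (M.succ b) = M.succ (M.add a b) := by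
  have := hQ (fun _ => a) _
    (show _ ∈ QAxioms from by right; right; right; right; left; rfl)
  simp only [Formula.Realize, Term.val, v0, v1] at this
  have := this a b
  simpa [Function.update] using this

theorem Q.mul_zero (a : M.carrier) : M.mul a M.zero = M.zero := by
  have := hQ (fun _ => a) _
    (show _ ∈ QAxioms from by right; right; right; right; right; left; rfl)
  simp only [Formula.Realize, Term.val, v0] at this
  have := this a
  simpa [Function.update] using this

theorem Q.mul_succ (a b : M.carrier) : M.mul a (M.succ b) = M.add (M.mul a b) a := by
  have := hQ (fun _ => a) _
    (show _ ∈ QAxioms from by right; right; right; right; right; right; left; rfl)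
  simp only [Formula.Realize, Term.val, v0, v1] at this
  have := this a b
  simpa [Function.update] using this

theorem Q.lt_iff (a b : M.carrier) : M.lt a b ↔ ∃ c, M.add c (M.succ a) = b := by
  have := hQ (fun _ => a) _
    (show _ ∈ QAxioms from by right; right; right; right; right; right; right; rfl)
  simp only [Formula.iffF, Formula.Realize, Term.val, v0, v1, v2] at this
  have := this a b
  simp only [Function.update] at this
  simp at this
  constructor
  · intro h
    rcases this.1 h with ⟨c, hc⟩
    exact ⟨c, hc⟩
  · rintro ⟨c, hc⟩
    exact this.2 c hc

theorem Q.emb_add (a b : ℕ) : M.add (M.emb a) (M.emb b) = M.emb (a + b) := by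
  induction b with
  | zero => simpa [Struct.emb] using Q.add_zero hQ (M.emb a)
  | succ b ih =>
      rw [show M.emb (b+1) = M.succ (M.emb b) from rfl, Q.add_succ hQ, ih]
      rfl

theorem Q.emb_mul (a b : ℕ) : M.mul (M.emb a) (M.emb b) = M.emb (a * b) := by
  induction b with
  | zero => simpa [Struct.emb] using Q.mul_zero hQ (M.emb a)
  | succ b ih =>
      have := Q.mul_succ hQ (M.emb a) (M.emb b)
      rw [show (M.emb (b+1)) = M.succ (M.emb b) from rfl, this, ih, Q.emb_add hQ]
      ring_nf

theorem Q.emb_inj : ∀ {a b : ℕ}, M.emb a = M.emb b → a = b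
  | 0, 0, _ => rfl
  | 0, b + 1, h => absurd h.symm (Q.succ_ne_zero hQ _)
  | a + 1, 0, h => absurd h (Q.succ_ne_zero hQ _)
  | a + 1, b + 1, h => by
      rw [Q.emb_inj (Q.succ_inj hQ h)]

/-- If `c + a = emb n` then `a` is standard and at most `n`. -/
theorem Q.add_eq_emb : ∀ (n : ℕ) (a c : M.carrier), M.add c a = M.emb n →
    ∃ m ≤ n, a = M.emb m
  | 0, a, c, h => by
      rcases Q.zero_or_succ hQ a with rfl | ⟨b, rfl⟩
      · exact ⟨0, le_refl 0, rfl⟩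
      · rw [Q.add_succ hQ] at h
        exact absurd h (Q.succ_ne_zero hQ _)
  | n + 1, a, c, h => by
      rcases Q.zero_or_succ hQ a with rfl | ⟨b, rfl⟩
      · exact ⟨0, Nat.zero_le _, rfl⟩
      · rw [Q.add_succ hQ] at h
        have h2 : M.add c b = M.emb n := Q.succ_inj hQ h
        rcases Q.add_eq_emb n b c h2 with ⟨m, hm, rfl⟩
        exact ⟨m + 1, by omega, rfl⟩

theorem Q.lt_emb_iff (a : M.carrier) (n : ℕ) :
    M.lt a (M.emb n) ↔ ∃ m < n, a = M.emb m := by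
  constructor
  · intro h
    rcases (Q.lt_iff hQ a (M.emb n)).1 h with ⟨c, hc⟩
    rcases Q.add_eq_emb hQ n _ c hc with ⟨m, hm, he⟩
    rcases m with _ | m
    · exact absurd he (Q.succ_ne_zero hQ a)
    · exact ⟨m, by omega, Q.succ_inj hQ he⟩
  · rintro ⟨m, hm, rfl⟩
    refine (Q.lt_iff hQ _ _).2 ⟨M.emb (n - m - 1), ?_⟩
    have : M.succ (M.emb m) = M.emb (m + 1) := rfl
    rw [this, Q.emb_add hQ]
    congr 1
    omega

theorem Q.emb_lt_emb {m n : ℕ} : M.lt (M.emb m) (M.emb n) ↔ m < n := by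
  rw [Q.lt_emb_iff hQ]
  constructor
  · rintro ⟨m', hm', he⟩
    rwa [Q.emb_inj hQ he]
  · intro h
    exact ⟨m, h, rfl⟩

/-- `swap`: S d + emb n = d + emb (n+1). -/
theorem Q.succ_add_emb (n : ℕ) (d : M.carrier) :
    M.add (M.succ d) (M.emb n) = M.add d (M.emb (n + 1)) := by
  induction n with
  | zero =>
      rw [show M.emb 0 = M.zero from rfl, Q.add_zero hQ,
        show M.emb 1 = M.succ M.zero from rfl, Q.add_succ hQ, Q.add_zero hQ]
  | succ n ih =>
      rw [show M.emb (n+1) = M.succ (M.emb n) from rfl, Q.add_succ hQ, ih,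
        show M.emb (n+2) = M.succ (M.emb (n+1)) from rfl, Q.add_succ hQ]

theorem Q.em_lt (n : ℕ) (a : M.carrier) :
    (∃ m ≤ n, a = M.emb m) ∨ M.lt (M.emb n) a := by
  induction n with
  | zero =>
      rcases Q.zero_or_succ hQ a with rfl | ⟨b, rfl⟩
      · exact Or.inl ⟨0, le_refl 0, rfl⟩
      · refine Or.inr ((Q.lt_iff hQ _ _).2 ⟨b, ?_⟩)
        rw [show M.succ (M.emb 0) = M.succ M.zero from rfl, Q.add_succ hQ, Q.add_zero hQ]
  | succ n ih =>
      rcases ih with ⟨m, hm, rfl⟩ | h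
      · exact Or.inl ⟨m, by omega, rfl⟩
      · rcases (Q.lt_iff hQ _ _).1 h with ⟨c, hc⟩
        rcases Q.zero_or_succ hQ c with rfl | ⟨d, rfl⟩
        · left
          refine ⟨n + 1, le_refl _, ?_⟩
          have h0 : M.add M.zero (M.emb (n+1)) = M.emb (n+1) := by
            have := Q.emb_add hQ 0 (n+1)
            simpa [Struct.emb] using this
          rw [← hc, show M.succ (M.emb n) = M.emb (n+1) from rfl, h0]
        · right
          refine (Q.lt_iff hQ _ _).2 ⟨d, ?_⟩
          rw [show M.succ (M.emb (n+1)) = M.emb (n+2) from rfl, ← hc,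
            show M.succ (M.emb n) = M.emb (n+1) from rfl,
            Q.succ_add_emb hQ, show (n+1)+1 = n+2 from rfl]

omit hQ in
theorem Term.val_update_not_mem {i : ℕ} {t : Term} (hit : i ∉ t.varsOf)
    (v : ℕ → M.carrier) (a : M.carrier) :
    Term.val M (Function.update v i a) t = Term.val M v t :=
  Term.val_agree (fun x hx => by
    have hxi : x ≠ i := fun h => hit (h ▸ hx)
    simp [Function.update, hxi])

theorem Q.val_emb (v : ℕ → ℕ) (t : Term) :
    t.val M (M.emb ∘ v) = M.emb (t.val stdModel v) := by
  induction t with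
  | var i => rfl
  | zero => rfl
  | succ t ih => simp only [Term.val, ih]; rfl
  | add t u iht ihu =>
      simp only [Term.val, iht, ihu, Q.emb_add hQ]
  | mul t u iht ihu =>
      simp only [Term.val, iht, ihu, Q.emb_mul hQ]

omit hQ in
theorem Q.update_emb (v : ℕ → ℕ) (i a : ℕ) :
    M.emb ∘ (Function.update v i a) = Function.update (M.emb ∘ v) i (M.emb a) := by
  funext x
  rcases eq_or_ne x i with rfl | h
  · simp [Function.update]
  · simp [Function.comp, Function.update, h]

theorem Q.delta0_absolute {μ : Formula} (hμ : IsDelta0 μ) :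
    ∀ v : ℕ → ℕ, Formula.Realize stdModel v μ ↔ Formula.Realize M (M.emb ∘ v) μ := by
  induction hμ with
  | eq t u =>
      intro v
      simp only [Formula.Realize, Q.val_emb hQ]
      exact ⟨fun h => by rw [h], fun h => Q.emb_inj hQ h⟩
  | lt t u =>
      intro v
      simp only [Formula.Realize, Q.val_emb hQ, Q.emb_lt_emb hQ]
  | not _ ih => intro v; simp only [Formula.Realize]; rw [ih v]
  | and _ _ ih1 ih2 => intro v; simp only [Formula.Realize]; rw [ih1 v, ih2 v]
  | or _ _ ih1 ih2 => intro v; simp only [Formula.Realize]; rw [ih1 v, ih2 v]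
  | imp _ _ ih1 ih2 => intro v; simp only [Formula.Realize]; rw [ih1 v, ih2 v]
  | ball i t hit _ ih =>
      intro v
      simp only [Formula.Realize, Term.val, Term.val_update_not_mem hit,
        Function.update_self, Q.val_emb hQ]
      constructor
      · intro h b hb
        rcases (Q.lt_emb_iff hQ _ _).1 hb with ⟨m, hm, rfl⟩
        rw [← Q.update_emb, ← ih (Function.update v i m)]
        exact h m hm
      · intro h a ha
        rw [ih (Function.update v i a), Q.update_emb]
        exact h (M.emb a) ((Q.emb_lt_emb hQ).2 ha)
  | bex i t hit _ ih =>
      intro v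
      simp only [Formula.Realize, Term.val, Term.val_update_not_mem hit,
        Function.update_self, Q.val_emb hQ]
      constructor
      · rintro ⟨a, ha1, ha2⟩
        refine ⟨M.emb a, (Q.emb_lt_emb hQ).2 ha1, ?_⟩
        rw [← Q.update_emb, ← ih (Function.update v i a)]
        exact ha2
      · rintro ⟨b, hb1, hb2⟩
        rcases (Q.lt_emb_iff hQ _ _).1 hb1 with ⟨m, hm, rfl⟩
        refine ⟨m, hm, ?_⟩
        rw [ih (Function.update v i m), Q.update_emb]
        exact hb2

theorem Q.sigma1_persist {σ : Formula} (hσ : IsSigma1 σ) (v : ℕ → ℕ)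
    (h : Formula.Realize stdModel v σ) : Formula.Realize M (M.emb ∘ v) σ := by
  rcases hσ with ⟨i, μ, hμ, rfl⟩
  simp only [Formula.Realize] at h ⊢
  rcases h with ⟨a, ha⟩
  refine ⟨M.emb a, ?_⟩
  rw [← Q.update_emb, ← Q.delta0_absolute hQ hμ]
  exact ha

end QModel


/-! ### Helpers for the main theorem -/

theorem Struct.emb_std (n : ℕ) : stdModel.emb n = n := by
  induction n with
  | zero => rfl
  | succ n ih => show Nat.succ (stdModel.emb n) = n + 1; rw [ih]

theorem Term.ren_numeral (f : ℕ → ℕ) (n : ℕ) : (numeral n).ren f = numeral n := by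
  induction n with
  | zero => rfl
  | succ n ih => simp [numeral, Term.ren, ih]

theorem Formula.realize_sentence {M : Struct} {v w : ℕ → M.carrier} {σ : Formula}
    (hσ : σ.IsSentence) : Formula.Realize M v σ ↔ Formula.Realize M w σ :=
  Formula.realize_agree (fun x hx => by
    rw [hσ] at hx; exact absurd hx (Finset.notMem_empty x))

theorem Proves.ren {T : Set Formula} (hTsent : ∀ σ ∈ T, σ.IsSentence) {Φ : Formula}
    (h : Proves T Φ) {f : ℕ → ℕ} (hf : Function.Injective f) : Proves T (Φ.ren f) := by
  intro M v hMv
  rw [Formula.realize_ren hf]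
  exact h M (v ∘ f) (fun ψ hψ =>
    (Formula.realize_sentence (hTsent ψ hψ)).1 (hMv ψ hψ))

theorem Formula.length_pos : ∀ φ : Formula, 0 < φ.length
  | .eq t u => by simp [Formula.length, Formula.symbols]
  | .lt t u => by simp [Formula.length, Formula.symbols]
  | .not φ => by simp [Formula.length, Formula.symbols]
  | .and φ ψ => by simp [Formula.length, Formula.symbols]
  | .or φ ψ => by simp [Formula.length, Formula.symbols]
  | .imp φ ψ => by simp [Formula.length, Formula.symbols]
  | .all i φ => by simp [Formula.length, Formula.symbols]
  | .ex i φ => by simp [Formula.length, Formula.symbols]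

theorem psiOf_length (φ : Formula) :
    (psiOf φ).length = φ.length + (φ.subst 0 v2).length + 8 := by
  simp [psiOf, Formula.length, Formula.symbols, Term.symbols, v0, v2]
  omega

theorem tTerm_length (k : ℕ) : (tTerm k).length = 2 * k + 15 := by
  have h10 := Term.length_numeral 10
  have hk := Term.length_numeral k
  simp [Term.length] at h10 hk
  simp [tTerm, Term.length, Term.symbols, h10, hk]
  omega

@[simp] theorem tTerm_varsOf (k : ℕ) : (tTerm k).varsOf = ∅ := by
  simp [tTerm, Term.varsOf]

theorem tTerm_val_std (k : ℕ) (v : ℕ → ℕ) :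
    (tTerm k).val stdModel v = 10 * (k * k) := by
  simp only [tTerm, Term.val, Term.val_numeral_std]

theorem tTerm_val {M : Struct}
    (hQ : ∀ (v : ℕ → M.carrier) (ψ : Formula), ψ ∈ QAxioms → Formula.Realize M v ψ)
    (k : ℕ) (v : ℕ → M.carrier) :
    (tTerm k).val M v = M.emb (10 * (k * k)) := by
  have h1 : (tTerm k).val M v
      = M.mul ((numeral 10).val M v) (M.mul ((numeral k).val M v) ((numeral k).val M v)) := rfl
  rw [h1, Term.val_numeral, Term.val_numeral, Q.emb_mul hQ, Q.emb_mul hQ]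

/-- Every number nameable by a short formula is nameable by a short formula with small
variables, hence is in `BRel`. -/
theorem nameable_brel {T : Set Formula} (hTsent : ∀ σ ∈ T, σ.IsSentence)
    {g : ℕ → ℕ} (hg : GoodBound g) {j m : ℕ} (h : Nameable T j m) : BRel T g m j := by
  obtain ⟨μ, hlen, hfree, hprov⟩ := h
  set S : Finset ℕ := insert 0 μ.allVars with hS
  have hcard : S.card ≤ j := by
    have h1 : S.card ≤ μ.allVars.card + 1 := Finset.card_insert_le _ _
    have h2 := Formula.card_allVars_le μ
    omega
  have hinj := rankFun_injective hcard
  have hf0 : rankFun S j 0 = 0 := rankFun_zero (Finset.mem_insert_self _ _)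
  refine ⟨μ.ren (rankFun S j), ?_, ?_, ?_, ?_⟩
  · refine hg.2 _ j ?_ ?_
    · rw [Formula.allVars_ren]
      intro x hx
      rcases Finset.mem_image.1 hx with ⟨y, hy, rfl⟩
      exact Finset.mem_range.2 (rankFun_lt hcard (Finset.mem_insert_of_mem hy))
    · rwa [Formula.length_ren]
  · rwa [Formula.length_ren]
  · intro x hx
    rcases Finset.mem_image.1 (Formula.freeVars_ren_subset _ _ hx) with ⟨y, hy, rfl⟩
    have : y = 0 := by simpa using hfree hy
    subst this
    rw [hf0]
    simp
  · have hren : (Formula.all 0 (Formula.iffF μ (.eq v0 (numeral m)))).ren (rankFun S j)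
        = Formula.all 0 (Formula.iffF (μ.ren (rankFun S j)) (.eq v0 (numeral m))) := by
      simp [Formula.ren, Formula.iffF, Term.ren, v0, hf0, Term.ren_numeral]
    rw [← hren]
    exact Proves.ren hTsent hprov hinj


/-- Canonical assignment with prescribed values at 0 and 1. -/
def canon (M : Struct) (a b : M.carrier) : ℕ → M.carrier :=
  fun x => if x = 0 then a else if x = 1 then b else M.zero

/-- **Syntactic version of Gödel's first incompleteness theorem, part (i).**
If T is a consistent recursively axiomatizable extension of Q (with φ a Σ₁ formula
defining B), then T does not prove ¬φ(n,t), although ¬φ(n,t) is true. -/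
theorem syntactic_incompleteness_i
    (T : Set Formula) (hTsent : ∀ σ ∈ T, σ.IsSentence)
    (hQT : QAxioms ⊆ T) (hrec : RecursivelyAxiomatizable T) (hcons : Consistent T)
    (g : ℕ → ℕ) (hg : GoodBound g)
    (φ : Formula) (hφ : DefinesRel φ (BRel T g)) (hφ2 : 2 ∉ φ.allVars)
    (k₂ : ℕ) (hk₂ : (psiOf φ).countFreeOcc 1 < k₂)
    (k : ℕ) (hk : k = (psiOf φ).length * k₂)
    (n : ℕ) (hn : ¬ Nameable T (10 * (k * k)) n)
    (hleast : ∀ m < n, Nameable T (10 * (k * k)) m)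
    (hphiSigma : IsSigma1 φ) :
    IsTrue (.not ((φ.subst 0 (numeral n)).subst 1 (tTerm k))) ∧
      ¬ Proves T (.not ((φ.subst 0 (numeral n)).subst 1 (tTerm k))) := by
  obtain ⟨hφfree, hφiff⟩ := hφ
  set j : ℕ := 10 * (k * k) with hj
  -- realization of φ depends only on the values at 0 and 1
  have agree01 : ∀ (M : Struct) (u w : ℕ → M.carrier), u 0 = w 0 → u 1 = w 1 →
      (Formula.Realize M u φ ↔ Formula.Realize M w φ) := by
    intro M u w h0 h1
    refine Formula.realize_agree fun x hx => ?_
    rcases Finset.mem_insert.1 (hφfree hx) with rfl | hx1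
    · exact h0
    · rw [Finset.mem_singleton] at hx1; subst hx1; exact h1
  -- conversion of substituted realization, standard model
  have stdconv : ∀ (s : Term), s.varsOf = ∅ → ∀ (i' : ℕ) (v : ℕ → ℕ),
      (Formula.Realize stdModel v ((φ.subst 0 (numeral i')).subst 1 s) ↔
        Formula.Realize stdModel (canon stdModel i' (s.val stdModel v)) φ) := by
    intro s hs i' v
    rw [Formula.realize_subst (fun y hy => by
        rw [hs] at hy; exact absurd hy (Finset.notMem_empty y)),
      Formula.realize_subst (fun y hy => by
        rw [Term.varsOf_numeral] at hy; exact absurd hy (Finset.notMem_empty y))]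
    rw [Term.val_numeral, Struct.emb_std]
    refine agree01 _ _ _ (by simp [Function.update, canon]) ?_
    have : s.val stdModel (Function.update v 1 (s.val stdModel v)) = s.val stdModel v :=
      Term.val_agree fun x hx => by rw [hs] at hx; exact absurd hx (Finset.notMem_empty x)
    simp [Function.update, canon]
  have hBn : ¬ BRel T g n j := fun ⟨μ, _, h2, h3⟩ => hn ⟨μ, h2, h3⟩
  have hWn : ¬ Formula.Realize stdModel (canon stdModel n j) φ := by
    intro hW
    apply hBn
    refine (hφiff n j).2 fun v => ?_
    rw [stdconv (numeral j) (Term.varsOf_numeral j) n v, Term.val_numeral_std]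
    exact hW
  constructor
  · -- truth of ¬φ(n,t)
    intro v
    simp only [Formula.Realize]
    intro hv
    apply hWn
    have := (stdconv (tTerm k) (tTerm_varsOf k) n v).1 hv
    rwa [tTerm_val_std] at this
  · -- unprovability
    intro hP
    apply hn
    -- the naming formula χ
    refine ⟨(psiOf φ).subst 1 (tTerm k), ?_, ?_, ?_⟩
    · -- length bound
      have h1 := Formula.length_subst 1 (tTerm k) (psiOf φ)
      rw [tTerm_length] at h1
      have h2 : 10 ≤ (psiOf φ).length := by
        have := psiOf_length φ
        have p1 := Formula.length_pos φ
        have p2 := Formula.length_pos (φ.subst 0 v2)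
        omega
      have h3 : (psiOf φ).countFreeOcc 1 + 1 ≤ k₂ := hk₂
      set L := (psiOf φ).length with hL
      set c := (psiOf φ).countFreeOcc 1 with hc
      have hck : 10 * (c + 1) ≤ k := by
        calc 10 * (c + 1) ≤ L * k₂ := Nat.mul_le_mul h2 h3
          _ = k := hk.symm
      have h4 : L + c * (2 * k + 15) < 10 * (k * k) := by nlinarith
      omega
    · -- free variables of χ
      have hfree_psi : (psiOf φ).freeVars ⊆ {0, 1} := by
        intro x hx
        simp only [psiOf, Formula.freeVars] at hx
        rcases Finset.mem_union.1 hx with hx | hx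
        · exact hφfree hx
        · rw [Finset.mem_erase] at hx
          obtain ⟨hx2, hx'⟩ := hx
          rcases Finset.mem_union.1 hx' with hx' | hx'
          · simp only [v0, v2, Term.varsOf, Finset.mem_union, Finset.mem_singleton] at hx'
            rcases hx' with rfl | rfl
            · exact absurd rfl hx2
            · simp
          · rcases Finset.mem_union.1 (Formula.freeVars_subst 0 v2 φ hx') with h | h
            · have h' := Finset.mem_erase.1 h
              rcases Finset.mem_insert.1 (hφfree h'.2) with rfl | h1
              · exact absurd rfl h'.1
              · rw [Finset.mem_singleton] at h1; subst h1; simp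
            · simp only [v2, Term.varsOf, Finset.mem_singleton] at h
              exact absurd h hx2
      intro x hx
      rcases Finset.mem_union.1 (Formula.freeVars_subst 1 (tTerm k) (psiOf φ) hx) with h | h
      · have h' := Finset.mem_erase.1 h
        rcases Finset.mem_insert.1 (hfree_psi h'.2) with rfl | h1
        · simp
        · rw [Finset.mem_singleton] at h1; exact absurd h1 h'.1
      · rw [tTerm_varsOf] at h; exact absurd h (Finset.notMem_empty x)
    · -- provability of the naming biconditional
      intro M v hMv
      have hTall : ∀ (w : ℕ → M.carrier) (ψ : Formula), ψ ∈ T → Formula.Realize M w ψ :=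
        fun w ψ hψ => (Formula.realize_sentence (hTsent ψ hψ)).1 (hMv ψ hψ)
      have hQM : ∀ (w : ℕ → M.carrier) (ψ : Formula), ψ ∈ QAxioms → Formula.Realize M w ψ :=
        fun w ψ hψ => hTall w ψ (hQT hψ)
      -- T proves ¬φ(n,t), so in M:
      have hnotn : ¬ Formula.Realize M (canon M (M.emb n) (M.emb j)) φ := by
        have h1 := hP M (canon M (M.emb n) (M.emb j)) (fun ψ hψ => hTall _ ψ hψ)
        simp only [Formula.Realize] at h1
        intro hc
        apply h1
        rw [Formula.realize_subst (fun y hy => by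
            rw [tTerm_varsOf] at hy; exact absurd hy (Finset.notMem_empty y)),
          Formula.realize_subst (fun y hy => by
            rw [Term.varsOf_numeral] at hy; exact absurd hy (Finset.notMem_empty y))]
        rw [Term.val_numeral, tTerm_val hQM]
        exact (agree01 M _ _ (by simp [Function.update, canon])
          (by simp [Function.update, canon, hj])).2 hc
      -- for m < n, φ(m,t) holds in M
      have hF4 : ∀ m < n, Formula.Realize M (canon M (M.emb m) (M.emb j)) φ := by
        intro m hm
        have hB : BRel T g m j := nameable_brel hTsent hg (hleast m hm)
        have htrue := (hφiff m j).1 hB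
        have hstdφ : Formula.Realize stdModel (canon stdModel m j) φ := by
          have h0 := htrue (fun _ => 0)
          have := (stdconv (numeral j) (Term.varsOf_numeral j) m (fun _ => 0)).1 h0
          rwa [Term.val_numeral_std] at this
        have hpers := Q.sigma1_persist hQM hphiSigma _ hstdφ
        exact (agree01 M _ _ (by simp [canon, Function.comp, Struct.emb])
          (by simp [canon, Function.comp])).1 hpers
      -- unfolding χ
      set χ : Formula := (psiOf φ).subst 1 (tTerm k) with hχdef
      have chi_iff : ∀ (w : ℕ → M.carrier),
          Formula.Realize M w χ ↔
          (¬ Formula.Realize M (canon M (w 0) (M.emb j)) φ ∧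
            ∀ b, M.lt b (w 0) → Formula.Realize M (canon M b (M.emb j)) φ) := by
        intro w
        rw [hχdef]
        have hside : ∀ y ∈ (tTerm k).varsOf, y ∉ (psiOf φ).allVars := fun y hy => by
          rw [tTerm_varsOf] at hy; exact absurd hy (Finset.notMem_empty y)
        rw [Formula.realize_subst hside, tTerm_val hQM]
        simp only [psiOf, Formula.Realize, Term.val, v0, v2]
        refine and_congr (not_congr (agree01 M _ _ ?_ ?_)) (forall_congr' fun b => ?_)
        · simp [Function.update, canon]
        · simp [Function.update, canon, hj]
        · have hside2 : ∀ y ∈ (Term.var 2).varsOf, y ∉ φ.allVars := fun y hy => by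
            simp only [Term.varsOf, Finset.mem_singleton] at hy; subst hy; exact hφ2
          rw [Formula.realize_subst (s := Term.var 2) hside2]
          rw [show (Term.val M (Function.update (Function.update w 1 (M.emb j)) 2 b)
              (Term.var 2)) = b from by simp [Term.val, Function.update]]
          have hval0 : Function.update (Function.update w 1 (M.emb j)) 2 b 2 = b := by
            simp [Function.update]
          have hval1 : Function.update (Function.update w 1 (M.emb j)) 2 b 0 = w 0 := by
            simp [Function.update]
          rw [hval0, hval1]
          refine imp_congr Iff.rfl (agree01 M _ _ ?_ ?_)
          · simp [Function.update, canon]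
          · simp [Function.update, canon, hj]
      -- the naming biconditional holds in M
      show Formula.Realize M v (.all 0 (Formula.iffF χ (.eq v0 (numeral n))))
      simp only [Formula.iffF]
      show ∀ a : M.carrier, _
      intro a
      show (Formula.Realize M (Function.update v 0 a) χ →
            Formula.Realize M (Function.update v 0 a) (.eq v0 (numeral n))) ∧
          (Formula.Realize M (Function.update v 0 a) (.eq v0 (numeral n)) →
            Formula.Realize M (Function.update v 0 a) χ)
      have hEiff : Formula.Realize M (Function.update v 0 a) (.eq v0 (numeral n))
          ↔ a = M.emb n := by
        show Term.val M (Function.update v 0 a) v0 = _ ↔ _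
        rw [show Term.val M (Function.update v 0 a) v0 = a from by
            simp [v0, Term.val, Function.update],
          Term.val_numeral]
      constructor
      · -- χ → v₀ = n
        intro hχ'
        rw [chi_iff] at hχ'
        obtain ⟨h1, h2⟩ := hχ'
        simp only [Function.update_self] at h1 h2
        rw [hEiff]
        rcases Q.em_lt hQM n a with ⟨m, hm, rfl⟩ | hgt
        · rcases eq_or_lt_of_le hm with rfl | hm'
          · rfl
          · exact absurd (hF4 m hm') h1
        · exact absurd ((h2 (M.emb n)) hgt) hnotn
      · -- v₀ = n → χ
        intro hEq
        rw [hEiff] at hEq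
        rw [chi_iff]
        simp only [Function.update_self]
        subst hEq
        refine ⟨hnotn, fun b hb => ?_⟩
        rcases (Q.lt_emb_iff hQM _ _).1 hb with ⟨m, hm, rfl⟩
        exact hF4 m hm

end Boolos
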